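/- Fix a > 0, b > 0, I > 0 and φ ∈ ℝ. Define r = (2/√b)(I + a/2 + √(I(I+a))·sin φ)^{1/2} and p_r = √(b·I(I+a))·cos φ / (I + a/2 + √(I(I+a))·sin φ)^{1/2}. Then (1/(2b))·(p_r² + (a/r − b r/2)²) = I. -/

import Mathlib

/-- Inversion formula for the action-angle transformation of the radial
Hamiltonian: with `r` and `p_r` given by the action-angle formulas,
`(1/(2b))·(p_r² + (a/r − b r/2)²) = I`. -/
theorem action_angle_inversion (a b I φ : ℝ) (ha : 0 < a) (hb : 0 < b) (hI : 0 < I) :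
    let r := (2 / Real.sqrt b) *
      Real.sqrt (I + a / 2 + Real.sqrt (I * (I + a)) * Real.sin φ)
    let pr := Real.sqrt (b * I * (I + a)) * Real.cos φ /
      Real.sqrt (I + a / 2 + Real.sqrt (I * (I + a)) * Real.sin φ)
    (1 / (2 * b)) * (pr ^ 2 + (a / r - b * r / 2) ^ 2) = I := by
  intro r pr
  set K := Real.sqrt (I * (I + a)) with hKdef
  have hK2 : K ^ 2 = I * (I + a) := Real.sq_sqrt (by nlinarith)
  have hKpos : 0 < K := Real.sqrt_pos.mpr (by nlinarith)
  have hKlt : K < I + a / 2 := by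
    nlinarith [Real.sin_le_one φ, hK2]
  have hsin := Real.neg_one_le_sin φ
  have hS : 0 < I + a / 2 + K * Real.sin φ := by nlinarith
  have hsb : Real.sqrt b ^ 2 = b := Real.sq_sqrt hb.le
  have hsbpos : 0 < Real.sqrt b := Real.sqrt_pos.mpr hb
  have hsS : Real.sqrt (I + a / 2 + K * Real.sin φ) ^ 2 = I + a / 2 + K * Real.sin φ :=
    Real.sq_sqrt hS.le
  have hsSpos : 0 < Real.sqrt (I + a / 2 + K * Real.sin φ) := Real.sqrt_pos.mpr hS
  have hbK : Real.sqrt (b * I * (I + a)) ^ 2 = b * I * (I + a) :=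
    Real.sq_sqrt (by nlinarith)
  have hpyth := Real.sin_sq_add_cos_sq φ
  show (1 / (2 * b)) * (pr ^ 2 + (a / r - b * r / 2) ^ 2) = I
  have hr : r = (2 / Real.sqrt b) * Real.sqrt (I + a / 2 + K * Real.sin φ) := rfl
  have hpr : pr = Real.sqrt (b * I * (I + a)) * Real.cos φ /
      Real.sqrt (I + a / 2 + K * Real.sin φ) := rfl
  rw [hr, hpr]
  clear hr hpr
  clear_value K
  set s := Real.sqrt (I + a / 2 + K * Real.sin φ) with hs
  set t := Real.sqrt b with ht
  set u := Real.sqrt (b * I * (I + a)) with hu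
  clear_value s t u
  field_simp
  linear_combination (4 * Real.cos φ ^ 2 * t ^ 2) * hbK +
    (4 * Real.cos φ ^ 2 * b * I * (I + a) + a * (a * t ^ 2 + a * b - 4 * b * s ^ 2) -
      8 * b * s ^ 2 * I) * hsb +
    (b ^ 2 * (-2 * (2 * a - 2 * s ^ 2 - 2 * (I + a / 2 + K * Real.sin φ)) - 8 * I)) * hsS +
    (4 * b ^ 2 * Real.sin φ ^ 2) * hK2 +
    (4 * b ^ 2 * I * (I + a)) * hpyth
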